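/- arXiv:1806.01736 — 5 statements merged into one kernel-verified Lean document; each statement's English description precedes it below -/
import Mathlib

section
/- In a classically possible summoning task with unconstrained inputs and at most one return point, the common past input-point sets of any two return points are nonempty: if i ≠ j are return points, Q is a classical solution with local decidability at i and at j, and both i and j are attained (there exist inputs m with Q m = some i and m' with Q m' = some j), then S i ∩ S j is nonempty. -/
/-- In a classically possible summoning task with unconstrained
inputs and at most one return point, the common past input-point sets of any
two attained return points are nonempty. -/
theorem summoning_common_past_nonempty
    {κ : Type*} {V : κ → Type*} [∀ k, Nonempty (V k)] {ι : Type*}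
    (S : ι → Set κ) (Q : (∀ k, V k) → Option ι) (i j : ι) (hij : i ≠ j)
    (hloci : ∀ m m' : ∀ k, V k, (∀ k ∈ S i, m k = m' k) →
      (Q m = some i ↔ Q m' = some i))
    (hlocj : ∀ m m' : ∀ k, V k, (∀ k ∈ S j, m k = m' k) →
      (Q m = some j ↔ Q m' = some j))
    (hi : ∃ m, Q m = some i) (hj : ∃ m', Q m' = some j) :
    (S i ∩ S j).Nonempty := by
  by_contra hemp
  rw [Set.not_nonempty_iff_eq_empty] at hemp
  obtain ⟨m, hm⟩ := hi
  obtain ⟨m', hm'⟩ := hj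
  classical
  set m'' : ∀ k, V k := fun k => if k ∈ S i then m k else m' k with hdef
  have h1 : Q m'' = some i := by
    refine (hloci m m'' ?_).mp hm
    intro k hk; simp [hdef, hk]
  have h2 : Q m'' = some j := by
    refine (hlocj m' m'' ?_).mp hm'
    intro k hk
    have : k ∉ S i := fun h => Set.eq_empty_iff_forall_notMem.mp hemp k ⟨h, hk⟩
    simp [hdef, this]
  exact hij (by simpa [h1] using h2)
end

section
/- In a classically possible summoning task with unconstrained inputs and at most one return point, any possible set of inputs at the common past input points of two return points must logically exclude at least one of the pair: if i ≠ j are return points, Q is a classical solution with local decidability at i and at j, and m, m' are full inputs with Q m = some i and Q m' = some j, then m and m' differ at some input point k ∈ S i ∩ S j. -/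
/-- Any possible set of inputs at the common past input points of
two return points must logically exclude at least one of the pair: inputs
designating distinct return points must differ somewhere on the common past. -/
theorem summoning_inputs_differ_on_common_past
    {κ : Type*} {V : κ → Type*} [∀ k, Nonempty (V k)] {ι : Type*}
    (S : ι → Set κ) (Q : (∀ k, V k) → Option ι) (i j : ι) (hij : i ≠ j)
    (hloci : ∀ m m' : ∀ k, V k, (∀ k ∈ S i, m k = m' k) →
      (Q m = some i ↔ Q m' = some i))
    (hlocj : ∀ m m' : ∀ k, V k, (∀ k ∈ S j, m k = m' k) →
      (Q m = some j ↔ Q m' = some j))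
    (m m' : ∀ k, V k) (hm : Q m = some i) (hm' : Q m' = some j) :
    ∃ k ∈ S i ∩ S j, m k ≠ m' k := by
  by_contra h
  push_neg at h
  classical
  set m'' : ∀ k, V k := fun k => if k ∈ S i then m k else m' k with hdef
  have hi : Q m'' = some i := by
    refine (hloci m m'' fun k hk => ?_).mp hm
    simp [hdef, hk]
  have hj : Q m'' = some j := by
    refine (hlocj m' m'' fun k hk => ?_).mp hm'
    by_cases hk' : k ∈ S i
    · simp [hdef, hk', (h k ⟨hk', hk⟩).symm]
    · simp [hdef, hk']
  exact hij (Option.some_injective _ (hi.symm.trans hj))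
end

section
/- In a classically possible summoning task with unconstrained inputs and at most one return point, the exclusion of one of any pair of return points is computable from the inputs on their common past: for return points i ≠ j with Q a classical solution having local decidability at i and at j, there exists a function D : (Π k, V k) → Bool that depends only on the restriction of the input to S i ∩ S j (if m and m' agree on all k ∈ S i ∩ S j then D m = D m'), such that for every full input m: if D m = true then Q m ≠ some j, and if D m = false then Q m ≠ some i. -/
/-- The exclusion of one of any pair of return points is
computable from the inputs on their common past. -/
theorem summoning_exclusion_decidable_on_common_past
    {κ : Type*} {V : κ → Type*} [∀ k, Nonempty (V k)] {ι : Type*}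
    (S : ι → Set κ) (Q : (∀ k, V k) → Option ι) (i j : ι) (hij : i ≠ j)
    (hloci : ∀ m m' : ∀ k, V k, (∀ k ∈ S i, m k = m' k) →
      (Q m = some i ↔ Q m' = some i))
    (hlocj : ∀ m m' : ∀ k, V k, (∀ k ∈ S j, m k = m' k) →
      (Q m = some j ↔ Q m' = some j)) :
    ∃ D : (∀ k, V k) → Bool,
      (∀ m m' : ∀ k, V k, (∀ k ∈ S i ∩ S j, m k = m' k) → D m = D m') ∧
      (∀ m : ∀ k, V k,
        (D m = true → Q m ≠ some j) ∧ (D m = false → Q m ≠ some i)) := by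
  classical
  refine ⟨fun m => decide (∃ m'' : ∀ k, V k,
      (∀ k ∈ S i ∩ S j, m'' k = m k) ∧ Q m'' = some i), ?_, ?_⟩
  · intro m m' h
    simp only [decide_eq_decide]
    constructor
    · rintro ⟨m'', hm'', hQ⟩
      exact ⟨m'', fun k hk => (hm'' k hk).trans (h k hk), hQ⟩
    · rintro ⟨m'', hm'', hQ⟩
      exact ⟨m'', fun k hk => (hm'' k hk).trans (h k hk).symm, hQ⟩
  · intro m
    constructor
    · intro hD hQj
      obtain ⟨m'', hm'', hQi⟩ := of_decide_eq_true hD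
      -- build m''' : equal to m on S j, m'' elsewhere
      set m3 : ∀ k, V k := fun k => if k ∈ S j then m k else m'' k with hm3
      have h1 : Q m3 = some j := by
        refine (hlocj m m3 ?_).mp hQj
        intro k hk; simp [hm3, hk]
      have h2 : Q m3 = some i := by
        refine (hloci m'' m3 ?_).mp hQi
        intro k hk
        by_cases hkj : k ∈ S j
        · simp [hm3, hkj, hm'' k ⟨hk, hkj⟩]
        · simp [hm3, hkj]
      exact hij (Option.some_inj.mp (h2.symm.trans h1))
    · intro hD hQi
      have := of_decide_eq_false hD
      exact this ⟨m, fun k _ => rfl, hQi⟩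
end

section
/- A classically possible summoning task with unconstrained inputs and multiple return points refines to a task with at most one return point whose used return points have pairwise intersecting pasts: suppose V, κ, ι, S are as in the model, Q : (Π k, V k) → Set ι gives the valid return points of each input with membership locally decidable (for each i, whether i ∈ Q m depends only on the restriction of m to S i), and σ : (Π k, V k) → Option ι is a classical selection algorithm satisfying (validity) σ m = some i → i ∈ Q m, (completeness) Q m ≠ ∅ → σ m ≠ none, and (causality) for each i, whether σ m = some i depends only on the restriction of m to S i. Then for any i ≠ j that are both attained by σ (there exist m, m' with σ m = some i and σ m' = some j), the set S i ∩ S j is nonempty. -/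
/-- A classically possible summoning task with unconstrained
inputs and multiple return points refines to a task with at most one return
point whose used return points have pairwise intersecting pasts. -/
theorem summoning_multiple_return_points_refines
    {κ : Type*} {V : κ → Type*} [∀ k, Nonempty (V k)] {ι : Type*}
    (S : ι → Set κ) (Q : (∀ k, V k) → Set ι)
    (hQloc : ∀ (i : ι) (m m' : ∀ k, V k), (∀ k ∈ S i, m k = m' k) →
      (i ∈ Q m ↔ i ∈ Q m'))
    (σ : (∀ k, V k) → Option ι)
    (hvalid : ∀ (m : ∀ k, V k) (i : ι), σ m = some i → i ∈ Q m)
    (hcomplete : ∀ m : ∀ k, V k, Q m ≠ ∅ → σ m ≠ none)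
    (hcausal : ∀ (i : ι) (m m' : ∀ k, V k), (∀ k ∈ S i, m k = m' k) →
      (σ m = some i ↔ σ m' = some i))
    (i j : ι) (hij : i ≠ j)
    (hi : ∃ m, σ m = some i) (hj : ∃ m', σ m' = some j) :
    (S i ∩ S j).Nonempty := by
  classical
  by_contra hdisj
  rw [Set.not_nonempty_iff_eq_empty] at hdisj
  obtain ⟨m, hm⟩ := hi
  obtain ⟨m', hm'⟩ := hj
  set m'' : ∀ k, V k := fun k => if k ∈ S i then m k else m' k with hm''
  have h1 : σ m'' = some i := by
    rw [← hcausal i m m'' (fun k hk => by simp [hm'', hk])]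
    exact hm
  have h2 : σ m'' = some j := by
    rw [← hcausal j m' m'' (fun k hk => by
      have : k ∉ S i := fun h => Set.eq_empty_iff_forall_notMem.mp hdisj k ⟨h, hk⟩
      simp [hm'', this])]
    exact hm'
  exact hij (by simpa [h1] using h2)
end

section
/- In a classically possible summoning task with unconstrained inputs and exactly one return point, the common past input-point sets of any two attained return points are nonempty: if Q : (Π k, V k) → ι is a total classical solution with local decidability (for each return point i, whether Q m = i depends only on the restriction of m to S i), i ≠ j, and there exist inputs m, m' with Q m = i and Q m' = j, then S i ∩ S j is nonempty. -/
/-- In a classically possible summoning task with unconstrained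
inputs and exactly one return point, the common past input-point sets of any
two attained return points are nonempty. -/
theorem summoning_exactly_one_common_past_nonempty
    {κ : Type*} {V : κ → Type*} [∀ k, Nonempty (V k)] {ι : Type*}
    (S : ι → Set κ) (Q : (∀ k, V k) → ι)
    (hloc : ∀ (i : ι) (m m' : ∀ k, V k), (∀ k ∈ S i, m k = m' k) →
      (Q m = i ↔ Q m' = i))
    (i j : ι) (hij : i ≠ j)
    (hi : ∃ m, Q m = i) (hj : ∃ m', Q m' = j) :
    (S i ∩ S j).Nonempty := by
  classical
  by_contra hdisj
  rw [Set.not_nonempty_iff_eq_empty] at hdisj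
  obtain ⟨m, hm⟩ := hi
  obtain ⟨m', hm'⟩ := hj
  set m'' : ∀ k, V k := fun k => if k ∈ S i then m k else m' k with hm''
  have h1 : Q m'' = i := by
    refine (hloc i m m'' ?_).mp hm
    intro k hk
    simp [hm'', hk]
  have h2 : Q m'' = j := by
    refine (hloc j m' m'' ?_).mp hm'
    intro k hk
    have : k ∉ S i := fun h => Set.eq_empty_iff_forall_notMem.mp hdisj k ⟨h, hk⟩
    simp [hm'', this]
  exact hij (h1 ▸ h2)
end
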